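/- Every equational complete theory is indiscernibly acyclic: if p_0 ⟶ p_1 ⟶ ... ⟶ p_{n-1} ⟶ p_0 is a cycle of complete types over ∅ in an equational theory, then all the p_i are equal. -/

import Mathlib

open FirstOrder FirstOrder.Language Set

universe u v w

namespace Equationality

variable {L : FirstOrder.Language.{u, v}}

section Struc
variable {M : Type w} [L.Structure M]

/-- The instance of the formula `φ(x; y)` at the parameter tuple `b`. -/
def instSet {α β : Type*} (φ : L.Formula (α ⊕ β)) (b : β → M) : Set (α → M) :=
  {a | φ.Realize (Sum.elim a b)}

/-- A sequence of `γ`-tuples indexed by a linear order is indiscernible if any two strictly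
increasing finite subsequences satisfy the same formulas. -/
def IsIndiscernible {I : Type*} [LinearOrder I] {γ : Type*} (a : I → γ → M) : Prop :=
  ∀ (n : ℕ) (i j : Fin n → I), StrictMono i → StrictMono j →
    ∀ φ : L.Formula (Fin n × γ),
      φ.Realize (fun p => a (i p.1) p.2) ↔ φ.Realize (fun p => a (j p.1) p.2)

/-- The complete type of a tuple over `∅`, as the set of formulas it realizes. -/
def typeOf {γ : Type*} (a : γ → M) : Set (L.Formula γ) := {φ | φ.Realize a}

end Struc

variable (T : L.Theory)

/-- `φ(x; y)` is an equation for `T`: in every model of `T`, the family of finite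
intersections of instances of `φ` has the descending chain condition. -/
def IsEquation {α β : Type*} (φ : L.Formula (α ⊕ β)) : Prop :=
  ∀ (M : Theory.ModelType.{u, v, max u v} T) (B : ℕ → Finset (β → M)),
    (Antitone fun n => ⋂ b ∈ B n, instSet φ b) →
    ∃ N, ∀ n, N ≤ n → (⋂ b ∈ B n, instSet φ b) = ⋂ b ∈ B N, instSet φ b

/-- A complete type over `∅` (in the variables `γ`), presented as the set of formulas
realized by some tuple in some model of `T`. -/
def IsRealizedType {γ : Type*} (p : Set (L.Formula γ)) : Prop :=
  ∃ (M : Theory.ModelType.{u, v, max u v} T) (a : γ → M), typeOf a = p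

/-- `p ⟶ q`: there are a model of `T`, a tuple `b` and an indiscernible sequence `(aᵢ)`
with `aᵢ ⊨ p(x, b)` for `i > 0` and `a₀ ⊨ q(x, b)`. -/
def Pf {α β : Type*} (p q : Set (L.Formula (α ⊕ β))) : Prop :=
  ∃ (M : Theory.ModelType.{u, v, max u v} T) (b : β → M) (a : ℕ → α → M),
    IsIndiscernible (L := L) a ∧ (∀ i : ℕ, 0 < i → typeOf (Sum.elim (a i) b) = p) ∧
      typeOf (Sum.elim (a 0) b) = q

/-- Boolean combinations of equations for `T`. -/
inductive IsBoolCombOfEquations {α β : Type*} :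
    L.Formula (α ⊕ β) → Prop
  | of_equation (φ : L.Formula (α ⊕ β)) : IsEquation T φ → IsBoolCombOfEquations φ
  | not (φ : L.Formula (α ⊕ β)) : IsBoolCombOfEquations φ → IsBoolCombOfEquations φ.not
  | inf (φ ψ : L.Formula (α ⊕ β)) :
      IsBoolCombOfEquations φ → IsBoolCombOfEquations ψ → IsBoolCombOfEquations (φ ⊓ ψ)
  | sup (φ ψ : L.Formula (α ⊕ β)) :
      IsBoolCombOfEquations φ → IsBoolCombOfEquations ψ → IsBoolCombOfEquations (φ ⊔ ψ)

/-- `T` is equational if every formula `ψ(x; y)` (in finite tuples of variables) is equivalent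
modulo `T` to a Boolean combination of equations `φ(x; y)`. -/
def IsEquational : Prop :=
  ∀ (n m : ℕ) (ψ : L.Formula (Fin n ⊕ Fin m)),
    ∃ χ : L.Formula (Fin n ⊕ Fin m), IsBoolCombOfEquations T χ ∧ T.Iff ψ χ
/-! ### Auxiliary development -/

section Aux

variable {k l : ℕ}

/-- The formula (in variables `Fin (t+1) × Fin k`) saying: there is an `l`-tuple `c` with
`φ(c, x_r)` for all `r ≠ 0` and `¬ φ(c, x_0)`. -/
noncomputable def sig (φ : L.Formula (Fin l ⊕ Fin k)) (t : ℕ) :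
    L.Formula (Fin (t + 1) × Fin k) :=
  Formula.iExs (Fin l) (Formula.relabel (Sum.elim Sum.inr Sum.inl :
      (Fin l ⊕ (Fin (t + 1) × Fin k)) → (Fin (t + 1) × Fin k) ⊕ Fin l)
    ((BoundedFormula.iInf
        (fun r : {r : Fin (t + 1) // r ≠ 0} => φ.relabel (Sum.map id fun x => (r.1, x)))) ⊓
      (φ.relabel (Sum.map id fun x => ((0 : Fin (t + 1)), x))).not))

theorem realize_sig {M : Type w} [L.Structure M]
    (φ : L.Formula (Fin l ⊕ Fin k)) (t : ℕ) (v : Fin (t + 1) × Fin k → M) :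
    (sig φ t).Realize v ↔ ∃ c : Fin l → M,
      (∀ r : Fin (t + 1), r ≠ 0 → φ.Realize (Sum.elim c fun x => v (r, x))) ∧
        ¬ φ.Realize (Sum.elim c fun x => v (0, x)) := by
  rw [sig, Formula.realize_iExs]
  refine exists_congr fun c => ?_
  rw [Formula.realize_relabel]
  have hv : (Sum.elim v c ∘ (Sum.elim Sum.inr Sum.inl :
      (Fin l ⊕ (Fin (t + 1) × Fin k)) → (Fin (t + 1) × Fin k) ⊕ Fin l)) = Sum.elim c v := by
    funext a; rcases a with a | a <;> rfl
  rw [hv]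
  have hrel : ∀ r : Fin (t + 1),
      (φ.relabel (Sum.map id fun x => (r, x))).Realize (Sum.elim c v) ↔
        φ.Realize (Sum.elim c fun x => v (r, x)) := by
    intro r
    rw [Formula.realize_relabel]
    have : (Sum.elim c v ∘ Sum.map id fun x => (r, x)) =
        Sum.elim c fun x => v (r, x) := by
      funext a; rcases a with a | a <;> rfl
    rw [this]
  rw [Formula.realize_inf, Formula.realize_not]
  have hinf : Formula.Realize (BoundedFormula.iInf
        (fun r : {r : Fin (t + 1) // r ≠ 0} => φ.relabel (Sum.map id fun x => (r.1, x))))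
        (Sum.elim c v) ↔
      ∀ r : Fin (t + 1), r ≠ 0 →
        φ.Realize (Sum.elim c fun x => v (r, x)) := by
    rw [show Formula.Realize (BoundedFormula.iInf
        (fun r : {r : Fin (t + 1) // r ≠ 0} => φ.relabel (Sum.map id fun x => (r.1, x))))
        (Sum.elim c v) =
        BoundedFormula.Realize (BoundedFormula.iInf
        (fun r : {r : Fin (t + 1) // r ≠ 0} => φ.relabel (Sum.map id fun x => (r.1, x))))
        (Sum.elim c v) default from rfl,
      BoundedFormula.realize_iInf]
    constructor
    · intro h r hr
      exact (hrel r).mp (h ⟨r, hr⟩)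
    · intro h r
      exact (hrel r.1).mpr (h r.1 r.2)
  rw [hinf, hrel 0]


theorem equation_closed (φ : L.Formula (Fin l ⊕ Fin k)) (hφ : IsEquation T φ)
    (M : Theory.ModelType.{u, v, max u v} T) (b : Fin l → (M : Type (max u v)))
    (a : ℕ → Fin k → M) (ha : IsIndiscernible (L := L) a)
    (h1 : ∀ i : ℕ, 0 < i → φ.Realize (Sum.elim b (a i))) :
    φ.Realize (Sum.elim b (a 0)) := by
  by_contra hc
  classical
  -- the window formulas hold at shifted positions
  have key : ∀ t s : ℕ, 0 < s →
      (sig φ t).Realize (M := M) fun p => a (s + (p.1 : ℕ)) p.2 := by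
    intro t s hs
    have h0 : (sig φ t).Realize (M := M) fun p : Fin (t + 1) × Fin k => a (p.1 : ℕ) p.2 := by
      rw [realize_sig]
      refine ⟨b, fun r hr => ?_, ?_⟩
      · have : (fun x => a (r : ℕ) x) = a (r : ℕ) := rfl
        rw [this]
        exact h1 _ (by have := Fin.pos_of_ne_zero hr; exact this)
      · exact hc
    have hmono1 : StrictMono (fun r : Fin (t + 1) => (r : ℕ)) := fun _ _ h => h
    have hmono2 : StrictMono (fun r : Fin (t + 1) => s + (r : ℕ)) :=
      fun _ _ h => Nat.add_lt_add_left h s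
    exact (ha (t + 1) _ _ hmono1 hmono2 (sig φ t)).mp h0
  -- the theory with constants asserting an infinite strict descent
  let A : Type := ℕ × Fin k
  let δ : ℕ → (L[[A]]).Sentence := fun t =>
    Formula.equivSentence ((sig φ t).relabel fun p => ((t + 1 - (p.1 : ℕ), p.2) : A))
  let T' : (L[[A]]).Theory := (L.lhomWithConstants A).onTheory T ∪ Set.range δ
  have hsat : T'.IsSatisfiable := by
    rw [Theory.isSatisfiable_iff_isFinitelySatisfiable]
    intro T0 hT0
    let g : (L[[A]]).Sentence → ℕ := fun s => if h : ∃ t, δ t = s then h.choose else 0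
    let m := T0.sup g
    letI : (constantsOn A).Structure M := constantsOn.structure fun q => a (m + 2 - q.1) q.2
    haveI hmodel : (M : Type (max u v)) ⊨ (T0 : (L[[A]]).Theory) := by
      rw [Theory.model_iff]
      intro ψ hψ
      rcases hT0 hψ with h | hr
      · obtain ⟨ψ0, hψ0, rfl⟩ := h
        exact (LHom.realize_onSentence (M := (M : Type (max u v)))
          (L.lhomWithConstants A) ψ0).mpr (M.is_model.realize_of_mem ψ0 hψ0)
      · obtain ⟨t0, rfl⟩ := hr
        have hex : ∃ t, δ t = δ t0 := ⟨t0, rfl⟩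
        set t := hex.choose with htdef
        have hδt : δ t = δ t0 := hex.choose_spec
        have htm : t ≤ m := by
          have hg : g (δ t0) = t := by simp only [g, dif_pos hex, htdef]
          exact hg ▸ Finset.le_sup hψ
        rw [← hδt]
        show (δ t).Realize M
        rw [Formula.realize_equivSentence, Formula.realize_relabel]
        have hcon : ((fun q => (L.con q : M)) ∘ fun p : Fin (t + 1) × Fin k =>
            ((t + 1 - (p.1 : ℕ), p.2) : A)) =
            fun p : Fin (t + 1) × Fin k => a (m + 1 - t + (p.1 : ℕ)) p.2 := by
          funext p
          show a (m + 2 - (t + 1 - (p.1 : ℕ))) p.2 = a (m + 1 - t + (p.1 : ℕ)) p.2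
          congr 1
          have := p.1.isLt
          omega
        rw [hcon]
        exact key t (m + 1 - t) (by omega)
    exact Theory.Model.isSatisfiable M
  obtain ⟨N⟩ := hsat
  letI : L.Structure N := (L.lhomWithConstants A).reduct N
  haveI hexp : (L.lhomWithConstants A).IsExpansionOn (N : Type (max u v)) :=
    LHom.isExpansionOn_reduct (L.lhomWithConstants A) (N : Type (max u v))
  haveI hNT : (N : Type (max u v)) ⊨ T :=
    ((L.lhomWithConstants A).onTheory_model T).mp (N.is_model.mono Set.subset_union_left)
  let Mstar : Theory.ModelType.{u, v, max u v} T := Theory.ModelType.of T N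
  let e : ℕ → Fin k → (N : Type (max u v)) := fun s x => (L.con ((s, x) : A) : N)
  have hδN : ∀ t : ℕ, ∃ c : Fin l → (N : Type (max u v)),
      (∀ s : ℕ, 1 ≤ s → s ≤ t → φ.Realize (Sum.elim c (e s))) ∧
        ¬ φ.Realize (Sum.elim c (e (t + 1))) := by
    intro t
    have hreal : (δ t).Realize N :=
      N.is_model.realize_of_mem (δ t) (Set.mem_union_right _ ⟨t, rfl⟩)
    rw [show δ t = Formula.equivSentence ((sig φ t).relabel fun p =>
        ((t + 1 - (p.1 : ℕ), p.2) : A)) from rfl] at hreal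
    rw [Formula.realize_equivSentence, Formula.realize_relabel] at hreal
    rw [show ((fun q => (L.con q : N)) ∘ fun p : Fin (t + 1) × Fin k =>
        ((t + 1 - (p.1 : ℕ), p.2) : A)) =
        fun p : Fin (t + 1) × Fin k => e (t + 1 - (p.1 : ℕ)) p.2 from rfl] at hreal
    rw [realize_sig] at hreal
    obtain ⟨c, hpos, hneg⟩ := hreal
    refine ⟨c, fun s hs1 hs2 => ?_, ?_⟩
    · have hlt : t + 1 - s < t + 1 := by omega
      have := hpos ⟨t + 1 - s, hlt⟩ (by
        intro h0
        have : t + 1 - s = 0 := congrArg Fin.val h0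
        omega)
      have harg : (fun x => e (t + 1 - ((⟨t + 1 - s, hlt⟩ : Fin (t + 1)) : ℕ)) x) = e s := by
        funext x; congr 1; show t + 1 - (t + 1 - s) = s; omega
      rwa [harg] at this
    · have harg : (fun x => e (t + 1 - ((0 : Fin (t + 1)) : ℕ)) x) = e (t + 1) := by
        funext x; congr 1
      rwa [harg] at hneg
  -- descending chain contradiction
  let B : ℕ → Finset (Fin k → (N : Type (max u v))) := fun t => (Finset.Icc 1 t).image e
  have hanti : Antitone fun n => ⋂ b' ∈ B n, instSet (M := (Mstar : Type (max u v))) φ b' := by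
    intro n n' hnn x hx
    simp only [Set.mem_iInter] at hx ⊢
    intro b' hb'
    exact hx b' (Finset.image_subset_image (Finset.Icc_subset_Icc_right hnn) hb')
  obtain ⟨N₀, hN₀⟩ := hφ Mstar B hanti
  obtain ⟨c, hpos, hneg⟩ := hδN N₀
  have hcmem : c ∈ ⋂ b' ∈ B N₀, instSet (M := (Mstar : Type (max u v))) φ b' := by
    refine Set.mem_iInter₂.mpr fun b' hb' => ?_
    obtain ⟨s, hs, rfl⟩ := Finset.mem_image.mp hb'
    rw [Finset.mem_Icc] at hs
    exact hpos s hs.1 hs.2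
  have hcmem2 : c ∈ ⋂ b' ∈ B (N₀ + 1), instSet (M := (Mstar : Type (max u v))) φ b' :=
    (Set.ext_iff.mp (hN₀ (N₀ + 1) (Nat.le_succ _)) c).mpr hcmem
  have : c ∈ instSet (M := (Mstar : Type (max u v))) φ (e (N₀ + 1)) := by
    replace hcmem2 := Set.mem_iInter₂.mp hcmem2
    exact hcmem2 (e (N₀ + 1)) (Finset.mem_image_of_mem e (Finset.mem_Icc.mpr ⟨by omega, le_rfl⟩))
  exact hneg this


end Aux

/-- Every equational complete theory is indiscernibly acyclic: if
`p₀ ⟶ p₁ ⟶ … ⟶ p_{n-1} ⟶ p₀` is a cycle of complete types over `∅` in an equational theory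
(encoded as an `n`-periodic sequence of types), then all the `pᵢ` are equal. -/
theorem equational_isIndiscerniblyAcyclic {k l : ℕ}
    (hT : T.IsComplete) (heq : IsEquational T) (n : ℕ) (hn : 0 < n)
    (p : ℕ → Set (L.Formula (Fin k ⊕ Fin l)))
    (hreal : ∀ i, IsRealizedType T (p i))
    (hper : ∀ i, p (i + n) = p i)
    (hcyc : ∀ i, Pf T (p i) (p (i + 1))) :
    ∀ i j, p i = p j := by

  classical
  let g : Fin k ⊕ Fin l → Fin l ⊕ Fin k := Sum.elim Sum.inr Sum.inl
  let g' : Fin l ⊕ Fin k → Fin k ⊕ Fin l := Sum.elim Sum.inr Sum.inl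
  have hg'g : ∀ {γ : Type (max u v)} (w : Fin k ⊕ Fin l → γ), (w ∘ g') ∘ g = w := by
    intro γ w; funext x; rcases x with x | x <;> rfl
  have hstep : ∀ (i : ℕ) (φ : L.Formula (Fin l ⊕ Fin k)), IsEquation T φ →
      φ.relabel g' ∈ p i → φ.relabel g' ∈ p (i + 1) := by
    intro i φ hφ hm
    obtain ⟨M, b, a, ha, h1, h0⟩ := hcyc i
    have hrealz : ∀ t : ℕ, 0 < t → φ.Realize (Sum.elim b (a t)) := by
      intro t ht
      have hmem : φ.relabel g' ∈ typeOf (Sum.elim (a t) b) := by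
        rw [h1 t ht]; exact hm
      have h2 : (φ.relabel g').Realize (Sum.elim (a t) b) := hmem
      rw [Formula.realize_relabel] at h2
      have hcomp : (Sum.elim (a t) b ∘ g') = Sum.elim b (a t) := by
        funext x; rcases x with x | x <;> rfl
      rwa [hcomp] at h2
    have hconc := equation_closed T φ hφ M b a ha hrealz
    rw [← h0]
    show (φ.relabel g').Realize (Sum.elim (a 0) b)
    rw [Formula.realize_relabel]
    have hcomp : (Sum.elim (a 0) b ∘ g') = Sum.elim b (a 0) := by
      funext x; rcases x with x | x <;> rfl
    rwa [hcomp]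
  have hup : ∀ (φ : L.Formula (Fin l ⊕ Fin k)), IsEquation T φ → ∀ i d : ℕ,
      φ.relabel g' ∈ p i → φ.relabel g' ∈ p (i + d) := by
    intro φ hφ i d hm
    induction d with
    | zero => exact hm
    | succ d ih =>
      rw [← Nat.add_assoc]
      exact hstep _ φ hφ ih
  have hperiod : ∀ i c : ℕ, p (i + c * n) = p i := by
    intro i c
    induction c with
    | zero => simp
    | succ c ih => rw [Nat.succ_mul, ← Nat.add_assoc, hper, ih]
  have hEdir : ∀ (φ : L.Formula (Fin l ⊕ Fin k)), IsEquation T φ → ∀ i j : ℕ,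
      φ.relabel g' ∈ p i → φ.relabel g' ∈ p j := by
    intro φ hφ i j hm
    have hbig : i ≤ j + (i + 1) * n := by
      have h1 : i + 1 ≤ (i + 1) * n := Nat.le_mul_of_pos_right _ hn
      omega
    have h2 := hup φ hφ i (j + (i + 1) * n - i) hm
    rw [show i + (j + (i + 1) * n - i) = j + (i + 1) * n from by omega] at h2
    rwa [hperiod j (i + 1)] at h2
  intro i j
  obtain ⟨Mi, wi, hwi⟩ := hreal i
  obtain ⟨Mj, wj, hwj⟩ := hreal j
  have hbool : ∀ (χ : L.Formula (Fin l ⊕ Fin k)), IsBoolCombOfEquations T χ →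
      (χ.Realize (wi ∘ g') ↔ χ.Realize (wj ∘ g')) := by
    intro χ hbc
    induction hbc with
    | of_equation φ0 hφ0 =>
      have hi : φ0.Realize (wi ∘ g') ↔ φ0.relabel g' ∈ p i := by
        rw [← hwi]
        exact (Formula.realize_relabel (φ := φ0) (g := g') (v := wi)).symm
      have hj : φ0.Realize (wj ∘ g') ↔ φ0.relabel g' ∈ p j := by
        rw [← hwj]
        exact (Formula.realize_relabel (φ := φ0) (g := g') (v := wj)).symm
      rw [hi, hj]
      exact ⟨hEdir φ0 hφ0 i j, hEdir φ0 hφ0 j i⟩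
    | not φ0 _ ih => rw [Formula.realize_not, Formula.realize_not, ih]
    | inf φ0 ψ0 _ _ ih1 ih2 => rw [Formula.realize_inf, Formula.realize_inf, ih1, ih2]
    | sup φ0 ψ0 _ _ ih1 ih2 => rw [Formula.realize_sup, Formula.realize_sup, ih1, ih2]
  ext ψ
  obtain ⟨χ, hbc, hiff⟩ := heq l k (ψ.relabel g)
  have hi : ψ ∈ p i ↔ χ.Realize (wi ∘ g') := by
    rw [← hwi]
    have h2 : ψ.Realize wi ↔ (ψ.relabel g).Realize (wi ∘ g') := by
      rw [Formula.realize_relabel, hg'g wi]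
    exact h2.trans hiff.realize_iff
  have hj : ψ ∈ p j ↔ χ.Realize (wj ∘ g') := by
    rw [← hwj]
    have h2 : ψ.Realize wj ↔ (ψ.relabel g).Realize (wj ∘ g') := by
      rw [Formula.realize_relabel, hg'g wj]
    exact h2.trans hiff.realize_iff
  rw [hi, hj]
  exact hbool χ hbc

end Equationality
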